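/- Let k be a field, N ≥ 1, d ∈ ℕ^{N+1}, and let (r_{ij})_{0 ≤ i ≤ j ≤ N} be a family of nonnegative integers with r_{ii} = d_i for all i. There exists a tuple (A_1, …, A_N), with A_i a d_i × d_{i−1} matrix over k, such that rank(A_j A_{j−1} ⋯ A_{i+1}) = r_{ij} for all 0 ≤ i < j ≤ N, if and only if for all 0 ≤ i ≤ j ≤ N one has r_{ij} − r_{i,j+1} − r_{i−1,j} + r_{i−1,j+1} ≥ 0 (with the convention r_{ij} = 0 when i < 0 or j > N). -/
import Mathlib

open Matrix Module

/-- The product `A_j ⋯ A_{i+2} A_{i+1}` (a segment of length `n` starting at vertex `i`)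
of a tuple of composable matrices. -/
def matProdSeg (k : Type) [Field k] (d : ℕ → ℕ)
    (A : ∀ i : ℕ, Matrix (Fin (d (i + 1))) (Fin (d i)) k) (i : ℕ) :
    ∀ n : ℕ, Matrix (Fin (d (i + n))) (Fin (d i)) k
  | 0 => (1 : Matrix (Fin (d i)) (Fin (d i)) k)
  | n + 1 => A (i + n) * matProdSeg k d A i n

/-- The extension of a rank pattern `r` to all integer indices, by `0`
outside the triangle `0 ≤ i ≤ j ≤ N`. -/
def rkExt (N : ℕ) (r : ℕ → ℕ → ℕ) : ℤ → ℤ → ℤ := fun i j =>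
  if 0 ≤ i ∧ i ≤ j ∧ j ≤ (N : ℤ) then (r i.toNat j.toNat : ℤ) else 0

set_option linter.unusedSectionVars false
set_option linter.unusedTactic false

section Helpers
variable {k : Type} [Field k]

lemma step_lemma' {V W : Type} [AddCommGroup V] [Module k V] [AddCommGroup W] [Module k W]
    [FiniteDimensional k V] [FiniteDimensional k W]
    (P Q : Submodule k V) (hPQ : P ≤ Q) (f : V →ₗ[k] W) :
    finrank k (Q.map f) + finrank k P ≤ finrank k Q + finrank k (P.map f) := by
  have h1 := LinearMap.finrank_range_add_finrank_ker (f.domRestrict Q)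
  have h2 := LinearMap.finrank_range_add_finrank_ker (f.domRestrict P)
  rw [LinearMap.range_domRestrict] at h1 h2
  have key : finrank k (LinearMap.ker (f.domRestrict P)) ≤
      finrank k (LinearMap.ker (f.domRestrict Q)) := by
    have hmem : ∀ x : LinearMap.ker (f.domRestrict P),
        ((Submodule.inclusion hPQ).comp (LinearMap.ker (f.domRestrict P)).subtype) x ∈
          LinearMap.ker (f.domRestrict Q) := by
      rintro ⟨⟨x, hxP⟩, hx0⟩
      simpa [LinearMap.mem_ker] using hx0
    apply LinearMap.finrank_le_finrank_of_injective
      (f := LinearMap.codRestrict _ _ hmem)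
    intro a b hab
    have := congrArg (fun y : LinearMap.ker (f.domRestrict Q) => (y : V)) hab
    ext
    simpa using this
  omega

lemma frob_mat {l m n p : Type} [Fintype l] [Fintype m] [Fintype n] [Fintype p]
    (A : Matrix l m k) (B : Matrix m n k) (C : Matrix n p k) :
    (A * B).rank + (B * C).rank ≤ B.rank + (A * B * C).rank := by
  have e1 : (A * B).rank = finrank k ((LinearMap.range B.mulVecLin).map A.mulVecLin) := by
    rw [Matrix.rank, Matrix.mulVecLin_mul, LinearMap.range_comp]
  have e2 : (A * B * C).rank =
      finrank k ((LinearMap.range (B * C).mulVecLin).map A.mulVecLin) := by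
    rw [Matrix.rank, Matrix.mul_assoc, Matrix.mulVecLin_mul, LinearMap.range_comp]
  have hPQ : LinearMap.range (B * C).mulVecLin ≤ LinearMap.range B.mulVecLin := by
    rw [Matrix.mulVecLin_mul, LinearMap.range_comp]
    exact LinearMap.map_le_range
  rw [e1, e2, Matrix.rank, Matrix.rank]
  exact step_lemma' _ _ hPQ _

lemma rank_submatrix_rows {l m n : Type} [Fintype l] [Fintype m] [Fintype n]
    (e : l ≃ m) (X : Matrix m n k) : (X.submatrix e id).rank = X.rank := by
  have : (X.submatrix e (Equiv.refl n)) = X.submatrix e id := rfl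
  rw [← this, Matrix.rank, Matrix.mulVecLin_submatrix, LinearMap.range_comp,
    LinearMap.range_comp, show LinearMap.funLeft k k (e : l → m) =
      (LinearEquiv.funCongrLeft k k e : (m → k) →ₗ[k] (l → k)) from rfl]
  rw [LinearEquiv.finrank_map_eq]
  have hsub : Submodule.map X.mulVecLin
      (LinearMap.range (LinearMap.funLeft k k ((Equiv.refl n).symm : n → n))) =
      LinearMap.range X.mulVecLin := by
    rw [show LinearMap.funLeft k k ((Equiv.refl n).symm : n → n) = LinearMap.id from rfl]
    rw [LinearMap.range_id, Submodule.map_top, LinearMap.range_eq_map]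
  rw [hsub, Matrix.rank]

lemma submatrix_mul_right {l m n p : Type} [Fintype m] (X : Matrix l m k) (C : Matrix m n k)
    (f : p → l) : (X.submatrix f id) * C = (X * C).submatrix f id := by
  ext t s
  simp [Matrix.mul_apply]

lemma A_cast {d : ℕ → ℕ} (A : ∀ i : ℕ, Matrix (Fin (d (i + 1))) (Fin (d i)) k)
    {a b : ℕ} (e : a = b) (x : Fin (d (a + 1))) (u : Fin (d a)) :
    A a x u = A b (Fin.cast (congrArg (fun t => d (t+1)) e) x) (Fin.cast (congrArg d e) u) := by
  subst e; rfl

lemma matProdSeg_split (d : ℕ → ℕ) (A : ∀ i : ℕ, Matrix (Fin (d (i + 1))) (Fin (d i)) k)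
    (i m n : ℕ) :
    matProdSeg k d A i (m + n) =
      ((matProdSeg k d A (i + m) n).submatrix
        (Fin.cast (congrArg d (Nat.add_assoc i m n).symm)) id) * matProdSeg k d A i m := by
  induction n with
  | zero =>
    ext x y
    simp [matProdSeg, Matrix.mul_apply, Matrix.one_apply, Fin.val_eq_val, Finset.sum_ite_eq]
  | succ n ih =>
    show A (i + (m + n)) * matProdSeg k d A i (m + n) = _
    rw [ih]
    show _ = ((A ((i+m) + n) * matProdSeg k d A (i+m) n).submatrix
        (Fin.cast (congrArg d (Nat.add_assoc i m (n+1)).symm)) id) * matProdSeg k d A i m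
    rw [← Matrix.mul_assoc]
    congr 1
    ext x z
    rw [Matrix.mul_apply, Matrix.submatrix_apply, Matrix.mul_apply]
    apply Fintype.sum_equiv (finCongr (congrArg d (Nat.add_assoc i m n).symm))
    intro u
    rw [A_cast A (Nat.add_assoc i m n).symm x u]
    simp only [Matrix.submatrix_apply, id_eq, finCongr_apply]

end Helpers

section FwdSec
variable {k : Type} [Field k]

lemma rank_submatrix_cast {a b : ℕ} {n : Type} [Fintype n] (c : a = b)
    (X : Matrix (Fin b) n k) : (X.submatrix (Fin.cast c) id).rank = X.rank :=
  rank_submatrix_rows (finCongr c) X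

lemma matProdSeg_rank_congr (d : ℕ → ℕ) (A : ∀ i : ℕ, Matrix (Fin (d (i + 1))) (Fin (d i)) k)
    (i : ℕ) {n₁ n₂ : ℕ} (h : n₁ = n₂) :
    (matProdSeg k d A i n₁).rank = (matProdSeg k d A i n₂).rank := by subst h; rfl

lemma submatrix_cancel {a b : ℕ} {l n : Type} (E : a = b) (X : Matrix l (Fin b) k)
    (Y : Matrix (Fin b) n k) :
    (X.submatrix id (Fin.cast E)) * (Y.submatrix (Fin.cast E) id) = X * Y := by
  subst E
  ext x y
  rw [Matrix.mul_apply, Matrix.mul_apply]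
  apply Finset.sum_congr rfl
  intro u _
  simp [show Fin.cast rfl u = u from rfl]

lemma matProdSeg_one (d : ℕ → ℕ) (A : ∀ i : ℕ, Matrix (Fin (d (i + 1))) (Fin (d i)) k) (i' : ℕ) :
    matProdSeg k d A i' 1 = A i' := by
  have h : matProdSeg k d A i' 1 = A i' * (1 : Matrix (Fin (d i')) (Fin (d i')) k) := rfl
  rw [h, Matrix.mul_one]

section Fwd
variable (N : ℕ) (d : ℕ → ℕ) (r : ℕ → ℕ → ℕ)
  (A : ∀ i : ℕ, Matrix (Fin (d (i + 1))) (Fin (d i)) k)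
  (hA : ∀ i j : ℕ, i < j → j ≤ N → (matProdSeg k d A i (j - i)).rank = r i j)
  (hdiag : ∀ i ≤ N, r i i = d i)
include hA hdiag

lemma hr : ∀ i j : ℕ, i ≤ j → j ≤ N → (matProdSeg k d A i (j - i)).rank = r i j := by
  intro i j hij hjN
  rcases eq_or_lt_of_le hij with rfl | h
  · rw [matProdSeg_rank_congr (h := Nat.sub_self i)]
    show (1 : Matrix (Fin (d i)) (Fin (d i)) k).rank = r i i
    rw [Matrix.rank_one, Fintype.card_fin, hdiag i hjN]
  · exact hA i j h hjN

lemma Ineq1 : ∀ i j : ℕ, i ≤ j → j < N → r i (j + 1) ≤ r i j := by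
  intro i j hij hjN
  have h1 : (matProdSeg k d A i (j - i)).rank = r i j :=
    hr N d r A hA hdiag i j hij (le_of_lt hjN)
  have h2 : (matProdSeg k d A i ((j+1) - i)).rank = r i (j+1) :=
    hr N d r A hA hdiag i (j+1) (by omega) (by omega)
  rw [← h1, ← h2]
  rw [matProdSeg_rank_congr d A i (h := show (j+1) - i = (j-i)+1 by omega)]
  show (A (i + (j - i)) * matProdSeg k d A i (j - i)).rank ≤ _
  exact Matrix.rank_mul_le_right _ _

lemma Ineq2 : ∀ i' j : ℕ, i' + 1 ≤ j → j ≤ N → r i' j ≤ r (i' + 1) j := by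
  intro i' j hij hjN
  have h1 : (matProdSeg k d A i' (j - i')).rank = r i' j :=
    hr N d r A hA hdiag i' j (by omega) hjN
  have h2 : (matProdSeg k d A (i'+1) (j - (i'+1))).rank = r (i'+1) j :=
    hr N d r A hA hdiag (i'+1) j (by omega) hjN
  rw [← h1, ← h2]
  rw [matProdSeg_rank_congr (h := show j - i' = 1 + (j - (i'+1)) by omega)]
  rw [matProdSeg_split]
  calc ((matProdSeg k d A (i' + 1) (j - (i'+1))).submatrix
        (Fin.cast (congrArg d (Nat.add_assoc i' 1 (j - (i'+1))).symm)) id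
          * matProdSeg k d A i' 1).rank
      ≤ ((matProdSeg k d A (i' + 1) (j - (i'+1))).submatrix
        (Fin.cast (congrArg d (Nat.add_assoc i' 1 (j - (i'+1))).symm)) id).rank :=
        Matrix.rank_mul_le_left _ _
    _ = (matProdSeg k d A (i' + 1) (j - (i'+1))).rank := rank_submatrix_cast _ _

lemma Ineq3 : ∀ i' j : ℕ, i' + 1 ≤ j → j < N →
    r (i'+1) (j+1) + r i' j ≤ r (i'+1) j + r i' (j+1) := by
  intro i' j hij hjN
  set i := i' + 1 with hi
  set n := j - i with hn
  have E : d (i' + (1 + n)) = d (i + n) := congrArg d (by omega)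
  set B := matProdSeg k d A i n with hB
  set A₀ := A (i + n) with hA₀
  set B' := B.submatrix (Fin.cast E) id with hB'
  set A' := A₀.submatrix id (Fin.cast E) with hA'
  have key := frob_mat A' B' (A i')
  have c1 : A' * B' = A₀ * B := submatrix_cancel E A₀ B
  -- rank (A'*B') = r i (j+1)
  have r1 : (A' * B').rank = r i (j+1) := by
    rw [c1]
    have : A₀ * B = matProdSeg k d A i (n+1) := rfl
    rw [this, ← matProdSeg_rank_congr d A i (show (j+1) - i = n + 1 by omega)]
    exact hr N d r A hA hdiag i (j+1) (by omega) (by omega)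
  -- rank (B' * A i') = r i' j
  have r2 : (B' * A i').rank = r i' j := by
    have hsplit := matProdSeg_split d A i' 1 n
    rw [matProdSeg_one d A] at hsplit
    have : (matProdSeg k d A (i' + 1) n).submatrix
        (Fin.cast (congrArg d (Nat.add_assoc i' 1 n).symm)) id * A i' = B' * A i' := rfl
    rw [this] at hsplit
    rw [← hsplit, ← matProdSeg_rank_congr d A i' (show j - i' = 1 + n by omega)]
    exact hr N d r A hA hdiag i' j (by omega) (by omega)
  -- rank B' = r i j
  have r3 : B'.rank = r i j := by
    rw [hB', rank_submatrix_cast, hB,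
      ← matProdSeg_rank_congr d A i (show j - i = n by omega)]
    exact hr N d r A hA hdiag i j (by omega) (by omega)
  -- rank (A' * B' * A i') = r i' (j+1)
  have r4 : (A' * B' * A i').rank = r i' (j+1) := by
    rw [c1]
    have h0 : A₀ * B = matProdSeg k d A i (n+1) := rfl
    rw [h0]
    have hsplit := matProdSeg_split d A i' 1 (n+1)
    rw [matProdSeg_one d A, submatrix_mul_right] at hsplit
    rw [← rank_submatrix_cast (congrArg d (Nat.add_assoc i' 1 (n+1)).symm)
      (matProdSeg k d A i (n+1) * A i'), ← hsplit,
      ← matProdSeg_rank_congr d A i' (show (j+1) - i' = 1 + (n+1) by omega)]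
    exact hr N d r A hA hdiag i' (j+1) (by omega) (by omega)
  rw [r1, r2, r3, r4] at key
  omega

lemma fwd : ∀ i j : ℤ, 0 ≤ i → i ≤ j → j ≤ (N : ℤ) →
    0 ≤ rkExt N r i j - rkExt N r i (j + 1) - rkExt N r (i - 1) j +
      rkExt N r (i - 1) (j + 1) := by
  intro i j hi hij hjN
  set i' := i.toNat with hi'
  set j' := j.toNat with hj'
  have hii : i = (i' : ℤ) := by omega
  have hjj : j = (j' : ℤ) := by omega
  have hi'j' : i' ≤ j' := by omega
  have hj'N : j' ≤ N := by omega
  have T1 : rkExt N r i j = (r i' j' : ℤ) := by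
    rw [rkExt, if_pos ⟨hi, hij, hjN⟩]
  have T2 : rkExt N r i (j+1) = if j' < N then (r i' (j'+1) : ℤ) else 0 := by
    by_cases h : j' < N
    · rw [rkExt, if_pos ⟨hi, by omega, by omega⟩, if_pos h]
      have a1 : i.toNat = i' := by omega
      have a2 : (j+1).toNat = j'+1 := by omega
      rw [a1, a2]
    · rw [rkExt, if_neg (by omega), if_neg h]
  have T3 : rkExt N r (i-1) j = if 1 ≤ i' then (r (i'-1) j' : ℤ) else 0 := by
    by_cases h : 1 ≤ i'
    · rw [rkExt, if_pos ⟨by omega, by omega, hjN⟩, if_pos h]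
      have a1 : (i-1).toNat = i' - 1 := by omega
      have a2 : j.toNat = j' := by omega
      rw [a1, a2]
    · rw [rkExt, if_neg (by omega), if_neg h]
  have T4 : rkExt N r (i-1) (j+1) =
      if 1 ≤ i' ∧ j' < N then (r (i'-1) (j'+1) : ℤ) else 0 := by
    by_cases h : 1 ≤ i' ∧ j' < N
    · rw [rkExt, if_pos ⟨by omega, by omega, by omega⟩, if_pos h]
      have a1 : (i-1).toNat = i' - 1 := by omega
      have a2 : (j+1).toNat = j'+1 := by omega
      rw [a1, a2]
    · rw [rkExt, if_neg (by omega), if_neg h]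
  rw [T1, T2, T3, T4]
  by_cases h1 : 1 ≤ i' <;> by_cases h2 : j' < N <;>
    simp only [h1, h2, and_true, and_false, if_true, if_false, if_neg, ite_true, ite_false]
  · -- interior : Ineq3 with i'-1
    have := Ineq3 N d r A hA hdiag (i'-1) j' (by omega) h2
    have e : i' - 1 + 1 = i' := by omega
    rw [e] at this
    omega
  · -- j' = N : Ineq2
    have := Ineq2 N d r A hA hdiag (i'-1) j' (by omega) hj'N
    have e : i' - 1 + 1 = i' := by omega
    rw [e] at this
    omega
  · -- i' = 0, j' < N : Ineq1
    have := Ineq1 N d r A hA hdiag i' j' hi'j' h2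
    omega
  · omega

end Fwd
end FwdSec

/-- extension of the rank pattern by zero, in ℕ -/
def rho (N : ℕ) (r : ℕ → ℕ → ℕ) (i b : ℕ) : ℕ := if i ≤ b ∧ b ≤ N then r i b else 0

/-- the "death index" of basis vector `s` at vertex `i` -/
def death (N : ℕ) (r : ℕ → ℕ → ℕ) (i s : ℕ) : ℕ :=
  Nat.findGreatest (fun b => s < rho N r i b) N

/-- the constructed matrices -/
def buildA (k : Type) [Field k] (N : ℕ) (d : ℕ → ℕ) (r : ℕ → ℕ → ℕ) :
    ∀ i : ℕ, Matrix (Fin (d (i + 1))) (Fin (d i)) k := fun i t s =>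
  if i < N ∧ i + 1 ≤ death N r i s ∧
      (t : ℕ) = rho N r (i+1) (death N r i s + 1) + ((s : ℕ) - rho N r i (death N r i s + 1))
    then 1 else 0

lemma rho_cast (N : ℕ) (r : ℕ → ℕ → ℕ) (i j : ℕ) :
    ((rho N r i j : ℕ) : ℤ) = rkExt N r (i : ℤ) (j : ℤ) := by
  rw [rho, rkExt]
  by_cases h : i ≤ j ∧ j ≤ N
  · rw [if_pos h, if_pos (by constructor; omega; constructor <;> [exact_mod_cast h.1; exact_mod_cast h.2])]
    simp
  · rw [if_neg h, if_neg (by push_cast; omega)]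
    simp

section Bwd
variable {k : Type} [Field k] (N : ℕ) (d : ℕ → ℕ) (r : ℕ → ℕ → ℕ)
  (H : ∀ i j : ℤ, 0 ≤ i → i ≤ j → j ≤ (N : ℤ) →
    0 ≤ rkExt N r i j - rkExt N r i (j + 1) - rkExt N r (i - 1) j +
      rkExt N r (i - 1) (j + 1))
  (hdiag : ∀ i ≤ N, r i i = d i)

include H in
lemma Hnat : ∀ i j : ℕ, i + 1 ≤ j → j ≤ N →
    rho N r i j + rho N r (i+1) (j+1) ≤ rho N r (i+1) j + rho N r i (j+1) := by
  intro i j hij hjN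
  have h := H (i+1) j (by omega) (by omega) (by omega)
  have e1 : ((i:ℤ)+1) - 1 = (i:ℤ) := by omega
  rw [e1] at h
  have c1 := rho_cast N r (i+1) j
  have c2 := rho_cast N r (i+1) (j+1)
  have c3 := rho_cast N r i j
  have c4 := rho_cast N r i (j+1)
  push_cast at c1 c2 c3 c4
  omega

include H in
lemma H0 : ∀ j : ℕ, j ≤ N → rho N r 0 (j+1) ≤ rho N r 0 j := by
  intro j hjN
  have h := H 0 j (by omega) (by omega) (by omega)
  have hz1 : rkExt N r ((0:ℤ) - 1) j = 0 := by rw [rkExt, if_neg (by omega)]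
  have hz2 : rkExt N r ((0:ℤ) - 1) (j+1) = 0 := by rw [rkExt, if_neg (by omega)]
  rw [hz1, hz2] at h
  have c1 := rho_cast N r 0 j
  have c2 := rho_cast N r 0 (j+1)
  push_cast at c1 c2
  omega

lemma rho_zero_of_gt (i b : ℕ) (h : N < b) : rho N r i b = 0 := by
  rw [rho, if_neg (by omega)]

include H in
lemma F1' : ∀ i j : ℕ, i ≤ j → rho N r i (j+1) ≤ rho N r i j := by
  intro i
  induction i with
  | zero =>
    intro j _
    by_cases hjN : j ≤ N
    · exact H0 N r H j hjN
    · rw [rho_zero_of_gt N r 0 (j+1) (by omega)]; omega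
  | succ i ih =>
    intro j hij
    by_cases hjN : j ≤ N
    · have h1 := Hnat N r H i j hij hjN
      have h2 := ih j (by omega)
      omega
    · rw [rho_zero_of_gt N r (i+1) (j+1) (by omega)]; omega

include H in
lemma F1aux : ∀ n i b : ℕ, i ≤ b → rho N r i (b+n) ≤ rho N r i b := by
  intro n
  induction n with
  | zero => intro i b _; simp
  | succ n ih =>
    intro i b hib
    have e : b + (n+1) = (b+n)+1 := by omega
    rw [e]
    have h1 := F1' N r H i (b+n) (by omega)
    have h2 := ih i b hib
    omega

include H in
lemma F1 : ∀ i b b' : ℕ, i ≤ b → b ≤ b' → rho N r i b' ≤ rho N r i b := by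
  intro i b b' hib hbb'
  have e : b' = b + (b' - b) := by omega
  rw [e]
  exact F1aux N r H (b' - b) i b hib

include H in
lemma F3aux : ∀ n i b : ℕ, i + n ≤ b →
    rho N r i b + rho N r (i+n) (b+1) ≤ rho N r (i+n) b + rho N r i (b+1) := by
  intro n
  induction n with
  | zero => intro i b _; simp
  | succ n ih =>
    intro i b hb
    have e : i + (n+1) = (i+n)+1 := by omega
    rw [e]
    by_cases hbN : b ≤ N
    · have h1 := Hnat N r H (i+n) b (by omega) hbN
      have h2 := ih i b (by omega)
      omega
    · rw [rho_zero_of_gt N r i b (by omega), rho_zero_of_gt N r (i+n+1) b (by omega),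
        rho_zero_of_gt N r i (b+1) (by omega), rho_zero_of_gt N r (i+n+1) (b+1) (by omega)]

include H in
lemma F3 : ∀ i i' b : ℕ, i ≤ i' → i' ≤ b →
    rho N r i b + rho N r i' (b+1) ≤ rho N r i' b + rho N r i (b+1) := by
  intro i i' b hii' hi'b
  have e : i' = i + (i' - i) := by omega
  rw [e]
  exact F3aux N r H (i' - i) i b (by omega)

include hdiag in
lemma rho_diag : ∀ i : ℕ, i ≤ N → rho N r i i = d i := by
  intro i hiN
  rw [rho, if_pos ⟨le_refl i, hiN⟩, hdiag i hiN]

include hdiag in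
lemma death_basic : ∀ i s : ℕ, i ≤ N → s < d i →
    i ≤ death N r i s ∧ death N r i s ≤ N ∧ s < rho N r i (death N r i s) ∧
      rho N r i (death N r i s + 1) ≤ s := by
  intro i s hiN hs
  have hPi : s < rho N r i i := by rw [rho_diag N d r hdiag i hiN]; exact hs
  have h1 : i ≤ death N r i s := Nat.le_findGreatest hiN hPi
  have h2 : death N r i s ≤ N := Nat.findGreatest_le N
  have h3 : s < rho N r i (death N r i s) := Nat.findGreatest_spec (P := fun b => s < rho N r i b) hiN hPi
  have h4 : rho N r i (death N r i s + 1) ≤ s := by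
    rcases Nat.lt_or_ge (death N r i s) N with h | h
    · have hdef : Nat.findGreatest (fun b => s < rho N r i b) N = death N r i s := rfl
      have := Nat.findGreatest_is_greatest (P := fun b => s < rho N r i b)
        (n := N) (k := death N r i s + 1) (by omega) (by omega)
      omega
    · rw [rho_zero_of_gt N r i (death N r i s + 1) (by omega)]
      omega
  exact ⟨h1, h2, h3, h4⟩

include H hdiag in
lemma death_char : ∀ i s b : ℕ, i ≤ N → b ≤ N → i ≤ b →
    s < rho N r i b → rho N r i (b+1) ≤ s → death N r i s = b := by
  intro i s b hiN hbN hib hsb hsb1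
  have hge : b ≤ death N r i s := Nat.le_findGreatest hbN hsb
  have hsd : s < d i := by
    have := F1 N r H i i b (le_refl i) hib
    have hd := rho_diag N d r hdiag i hiN
    omega
  rcases Nat.lt_or_ge b (death N r i s) with h | h
  · exfalso
    have h3 := (death_basic N d r hdiag i s hiN hsd).2.2.1
    have := F1 N r H i (b+1) (death N r i s) (by omega) (by omega)
    omega
  · omega

include H hdiag in
lemma death_mem : ∀ i s j : ℕ, i ≤ N → j ≤ N → i ≤ j → s < d i →
    (j ≤ death N r i s ↔ s < rho N r i j) := by
  intro i s j hiN hjN hij hs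
  constructor
  · intro h
    have h3 := (death_basic N d r hdiag i s hiN hs).2.2.1
    have := F1 N r H i j (death N r i s) hij h
    omega
  · intro h
    exact Nat.le_findGreatest hjN h

include H hdiag in
lemma prod_entry : ∀ n i : ℕ, i + n ≤ N → ∀ (t : Fin (d (i+n))) (s : Fin (d i)),
    matProdSeg k d (buildA k N d r) i n t s =
      if i + n ≤ death N r i (s : ℕ) ∧
          (t : ℕ) = rho N r (i+n) (death N r i (s : ℕ) + 1) +
            ((s : ℕ) - rho N r i (death N r i (s : ℕ) + 1))
        then 1 else 0 := by
  intro n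
  induction n with
  | zero =>
    intro i hiN t s
    have hb := death_basic N d r hdiag i s (by omega) s.isLt
    show (1 : Matrix (Fin (d i)) (Fin (d i)) k) t s = _
    rw [Matrix.one_apply]
    simp only [Nat.add_zero]
    by_cases h : t = s
    · rw [if_pos h, if_pos ⟨by omega, by omega⟩]
    · rw [if_neg h, if_neg ?_]
      rintro ⟨-, h2⟩
      exact h (Fin.ext (by omega))
  | succ n ih =>
    intro i hiN t s
    have hsd : (s : ℕ) < d i := s.isLt
    have hb := death_basic N d r hdiag i s (by omega) hsd
    set b := death N r i (s : ℕ) with hbdef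
    show (buildA k N d r (i+n) * matProdSeg k d (buildA k N d r) i n) t s = _
    rw [Matrix.mul_apply]
    by_cases hc : i + n ≤ b
    · -- survivor case
      have hF3 := F3 N r H i (i+n) b (by omega) hc
      have hF1b : rho N r (i+n) b ≤ rho N r (i+n) (i+n) := F1 N r H (i+n) (i+n) b (le_refl _) hc
      have hdall : rho N r (i+n) (i+n) = d (i+n) := rho_diag N d r hdiag (i+n) (by omega)
      have hu0 : rho N r (i+n) (b+1) + ((s:ℕ) - rho N r i (b+1)) < d (i+n) := by omega
      set u0 : Fin (d (i+n)) := ⟨rho N r (i+n) (b+1) + ((s:ℕ) - rho N r i (b+1)), hu0⟩ with hu0def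
      have hsum : ∀ u : Fin (d (i+n)),
          buildA k N d r (i+n) t u * matProdSeg k d (buildA k N d r) i n u s =
            if u = u0 then buildA k N d r (i+n) t u0 else 0 := by
        intro u
        rw [ih i (by omega) u s]
        by_cases h : u = u0
        · rw [h, if_pos rfl, if_pos ⟨hc, rfl⟩, mul_one]
        · rw [if_neg h, if_neg ?_, mul_zero]
          rintro ⟨-, h2⟩
          exact h (Fin.ext (by simpa using h2))
      rw [Finset.sum_congr rfl (fun u _ => hsum u), Finset.sum_ite_eq' Finset.univ u0 _,
        if_pos (Finset.mem_univ _)]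
      -- now compute buildA at u0
      have hval : (u0 : ℕ) = rho N r (i+n) (b+1) + ((s:ℕ) - rho N r i (b+1)) := rfl
      have he2 : rho N r (i+(n+1)) (b+1) = rho N r (i+n+1) (b+1) := rfl
      have hdeath : death N r (i+n) (u0 : ℕ) = b :=
        death_char N d r H hdiag (i+n) (u0 : ℕ) b (by omega) (by omega) hc (by omega) (by omega)
      rw [buildA]
      simp only [hdeath]
      have harith : rho N r (i+n+1) (b+1) + ((u0 : ℕ) - rho N r (i+n) (b+1)) =
          rho N r (i+n+1) (b+1) + ((s:ℕ) - rho N r i (b+1)) := by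
        rw [hval]
        omega
      by_cases hfin : i + (n+1) ≤ b ∧ (t : ℕ) = rho N r (i+(n+1)) (b+1) + ((s:ℕ) - rho N r i (b+1))
      · rw [if_pos hfin, if_pos ⟨by omega, ⟨by omega, by rw [harith]; omega⟩⟩]
      · rw [if_neg hfin, if_neg ?_]
        rintro ⟨-, h2, h3⟩
        rw [harith] at h3
        exact hfin ⟨by omega, by omega⟩
    · -- dead case
      have hzero : ∀ u : Fin (d (i+n)),
          buildA k N d r (i+n) t u * matProdSeg k d (buildA k N d r) i n u s = 0 := by
        intro u
        rw [ih i (by omega) u s, if_neg (by rintro ⟨h1, -⟩; omega), mul_zero]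
      rw [Finset.sum_congr rfl (fun u _ => hzero u), Finset.sum_const_zero,
        if_neg (by rintro ⟨h1, -⟩; omega)]

include H hdiag in
lemma fb1 : ∀ i n : ℕ, ∀ s : Fin (d i), i + n ≤ N → i + n ≤ death N r i (s:ℕ) →
    rho N r (i+n) (death N r i (s:ℕ) + 1) + ((s:ℕ) - rho N r i (death N r i (s:ℕ) + 1)) <
      rho N r (i+n) (death N r i (s:ℕ)) := by
  intro i n s hiN hsurv
  have hb := death_basic N d r hdiag i s (by omega) s.isLt
  have hF3 := F3 N r H i (i+n) (death N r i (s:ℕ)) (by omega) hsurv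
  omega

include H hdiag in
lemma fb2 : ∀ i n : ℕ, ∀ s : Fin (d i), i + n ≤ N → i + n ≤ death N r i (s:ℕ) →
    rho N r (i+n) (death N r i (s:ℕ) + 1) + ((s:ℕ) - rho N r i (death N r i (s:ℕ) + 1)) <
      d (i+n) := by
  intro i n s hiN hsurv
  have h1 := fb1 N d r H hdiag i n s hiN hsurv
  have h2 := F1 N r H (i+n) (i+n) (death N r i (s:ℕ)) (le_refl _) hsurv
  have h3 := rho_diag N d r hdiag (i+n) hiN
  omega

include H hdiag in
lemma f_inj : ∀ i n : ℕ, ∀ s s' : Fin (d i), i + n ≤ N →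
    i + n ≤ death N r i (s:ℕ) → i + n ≤ death N r i (s':ℕ) →
    rho N r (i+n) (death N r i (s:ℕ) + 1) + ((s:ℕ) - rho N r i (death N r i (s:ℕ) + 1)) =
      rho N r (i+n) (death N r i (s':ℕ) + 1) + ((s':ℕ) - rho N r i (death N r i (s':ℕ) + 1)) →
    s = s' := by
  intro i n s s' hiN hs hs' heq
  have hbs := death_basic N d r hdiag i s (by omega) s.isLt
  have hbs' := death_basic N d r hdiag i s' (by omega) s'.isLt
  rcases lt_trichotomy (death N r i (s:ℕ)) (death N r i (s':ℕ)) with h | h | h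
  · exfalso
    have hb1 := fb1 N d r H hdiag i n s' hiN hs'
    have hmono := F1 N r H (i+n) (death N r i (s:ℕ) + 1) (death N r i (s':ℕ))
      (by omega) (by omega)
    omega
  · apply Fin.ext
    rw [h] at heq hbs
    omega
  · exfalso
    have hb1 := fb1 N d r H hdiag i n s hiN hs
    have hmono := F1 N r H (i+n) (death N r i (s':ℕ) + 1) (death N r i (s:ℕ))
      (by omega) (by omega)
    omega

include H hdiag in
lemma rank_formula : ∀ i n : ℕ, i + n ≤ N →
    (matProdSeg k d (buildA k N d r) i n).rank = rho N r i (i+n) := by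
  intro i n hiN
  classical
  set M := matProdSeg k d (buildA k N d r) i n with hM
  set w : Fin (d i) → k := fun s => if i + n ≤ death N r i (s:ℕ) then 1 else 0 with hw
  have hMtM : Mᵀ * M = Matrix.diagonal w := by
    ext s s'
    rw [Matrix.mul_apply]
    simp only [Matrix.transpose_apply]
    by_cases hss : s = s'
    · subst hss
      rw [Matrix.diagonal_apply_eq]
      by_cases hsurv : i + n ≤ death N r i (s:ℕ)
      · have hlt := fb2 N d r H hdiag i n s hiN hsurv
        set fv : Fin (d (i+n)) := ⟨_, hlt⟩ with hfv
        have : ∀ t : Fin (d (i+n)), M t s * M t s = if t = fv then 1 else 0 := by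
          intro t
          rw [hM, prod_entry N d r H hdiag n i hiN t s]
          by_cases h : t = fv
          · rw [if_pos ⟨hsurv, by rw [h]⟩, if_pos h, mul_one]
          · rw [if_neg ?_, if_neg h, mul_zero]
            rintro ⟨-, h2⟩
            exact h (Fin.ext h2)
        rw [Finset.sum_congr rfl (fun t _ => this t), Finset.sum_ite_eq' Finset.univ fv _,
          if_pos (Finset.mem_univ _)]
        simp [hw, hsurv]
      · have : ∀ t : Fin (d (i+n)), M t s * M t s = 0 := by
          intro t
          rw [hM, prod_entry N d r H hdiag n i hiN t s, if_neg (by rintro ⟨h1, -⟩; omega),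
            mul_zero]
        rw [Finset.sum_congr rfl (fun t _ => this t), Finset.sum_const_zero]
        simp [hw, hsurv]
    · rw [Matrix.diagonal_apply_ne _ hss]
      have : ∀ t : Fin (d (i+n)), M t s * M t s' = 0 := by
        intro t
        rw [hM, prod_entry N d r H hdiag n i hiN t s, prod_entry N d r H hdiag n i hiN t s']
        by_cases h1 : i + n ≤ death N r i (s:ℕ) ∧
            (t:ℕ) = rho N r (i+n) (death N r i (s:ℕ) + 1) +
              ((s:ℕ) - rho N r i (death N r i (s:ℕ) + 1))
        · rw [if_pos h1, one_mul, if_neg ?_]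
          rintro ⟨hA1, hA2⟩
          have h12 := h1.2
          exact hss (f_inj N d r H hdiag i n s s' hiN h1.1 hA1 (by omega))
        · rw [if_neg h1, zero_mul]
      rw [Finset.sum_congr rfl (fun t _ => this t), Finset.sum_const_zero]
  have hMM : M * (Mᵀ * M) = M := by
    rw [hMtM]
    ext t s
    rw [Matrix.mul_diagonal]
    by_cases hsurv : i + n ≤ death N r i (s:ℕ)
    · rw [hw]; simp only [if_pos hsurv, mul_one]
    · have : M t s = 0 := by
        rw [hM, prod_entry N d r H hdiag n i hiN t s, if_neg (by rintro ⟨h1, -⟩; omega)]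
      rw [this, zero_mul]
  have hle1 : M.rank ≤ (Matrix.diagonal w).rank := by
    conv_lhs => rw [← hMM]
    rw [hMtM]
    exact Matrix.rank_mul_le_right _ _
  have hle2 : (Matrix.diagonal w).rank ≤ M.rank := by
    rw [← hMtM]
    exact Matrix.rank_mul_le_right _ _
  have hrk : M.rank = (Matrix.diagonal w).rank := le_antisymm hle1 hle2
  rw [hrk, Matrix.rank_diagonal]
  have hiff : ∀ s : Fin (d i), w s ≠ 0 ↔ (s:ℕ) < rho N r i (i+n) := by
    intro s
    rw [hw]
    by_cases hsurv : i + n ≤ death N r i (s:ℕ)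
    · simp only [if_pos hsurv]
      have := (death_mem N d r H hdiag i (s:ℕ) (i+n) (by omega) hiN (by omega) s.isLt).mp hsurv
      simp [this]
    · simp only [if_neg hsurv]
      have hdm := (death_mem N d r H hdiag i (s:ℕ) (i+n) (by omega) hiN (by omega) s.isLt)
      simp only [hsurv, false_iff, not_lt] at hdm
      simp only [ne_eq, not_true_eq_false, false_iff, not_lt]
      omega
  rw [Fintype.card_congr (Equiv.subtypeEquivRight hiff)]
  have hrd : rho N r i (i+n) ≤ d i := by
    have h1 := F1 N r H i i (i+n) (le_refl i) (by omega)
    have h2 := rho_diag N d r hdiag i (by omega)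
    omega
  exact Fintype.card_congr
    { toFun := fun x => (⟨(x.1 : ℕ), x.2⟩ : Fin (rho N r i (i+n)))
      invFun := fun y => ⟨⟨(y : ℕ), lt_of_lt_of_le y.isLt hrd⟩, y.isLt⟩
      left_inv := fun x => by ext; rfl
      right_inv := fun y => by ext; rfl } |>.trans (Fintype.card_fin _)

end Bwd

/-- There is a tuple of composable matrices realizing the rank pattern `r`
(i.e. `rank(A_j ⋯ A_{i+1}) = r_{ij}` for all `0 ≤ i < j ≤ N`) iff all second
differences `r_{ij} − r_{i,j+1} − r_{i−1,j} + r_{i−1,j+1}` are nonnegative. -/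
theorem stmt2 (k : Type) [Field k] (N : ℕ) (hN : 1 ≤ N) (d : ℕ → ℕ)
    (r : ℕ → ℕ → ℕ) (hdiag : ∀ i ≤ N, r i i = d i) :
    (∃ A : ∀ i : ℕ, Matrix (Fin (d (i + 1))) (Fin (d i)) k,
        ∀ i j : ℕ, i < j → j ≤ N → (matProdSeg k d A i (j - i)).rank = r i j) ↔
      (∀ i j : ℤ, 0 ≤ i → i ≤ j → j ≤ (N : ℤ) →
        0 ≤ rkExt N r i j - rkExt N r i (j + 1) - rkExt N r (i - 1) j +
          rkExt N r (i - 1) (j + 1)) := by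
  constructor
  · rintro ⟨A, hA⟩
    exact fwd N d r A hA hdiag
  · intro H
    refine ⟨buildA k N d r, ?_⟩
    intro i j hij hjN
    have h := rank_formula (k := k) N d r H hdiag i (j - i) (by omega)
    rw [h]
    have e : i + (j - i) = j := by omega
    rw [e, rho, if_pos ⟨by omega, hjN⟩]
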